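/- The differential entropy of the probability density p(α) = (1/T)·α²·exp(-α²/(2σ)) on [0,∞), where T = ∫_0^∞ α² exp(-α²/(2σ)) dα, equals γ - 1/2 + (1/2)(log 2 + log π + log σ), where γ is the Euler–Mascheroni constant. -/

import Mathlib

open MeasureTheory Real Set

section Aux

lemma hasDerivAt_Gamma_three_half :
    HasDerivAt Real.Gamma (√π - √π * (Real.eulerMascheroniConstant + 2 * Real.log 2) / 2) (3/2) := by
  have h1 : HasDerivAt (fun s : ℝ => s * Real.Gamma s)
      (1 * Real.Gamma (1/2) + (1/2) * (-√π * (Real.eulerMascheroniConstant + 2 * Real.log 2)))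
      (1/2) := (hasDerivAt_id _).mul Real.hasDerivAt_Gamma_one_half
  have h2 : HasDerivAt (fun s : ℝ => Real.Gamma (s + 1))
      (1 * Real.Gamma (1/2) + (1/2) * (-√π * (Real.eulerMascheroniConstant + 2 * Real.log 2)))
      (1/2) := by
    refine h1.congr_of_eventuallyEq ?_
    filter_upwards [eventually_ne_nhds (by norm_num : (1/2 : ℝ) ≠ 0)] with s hs
    rw [Real.Gamma_add_one hs]
  have h2' : HasDerivAt (fun s : ℝ => Real.Gamma (s + 1))
      (1 * Real.Gamma (1/2) + (1/2) * (-√π * (Real.eulerMascheroniConstant + 2 * Real.log 2)))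
      (3/2 + -1) := by rw [show (3/2 + -1 : ℝ) = 1/2 by norm_num]; exact h2
  have h3 := h2'.comp_add_const (3/2 : ℝ) (-1 : ℝ)
  have h4 : HasDerivAt Real.Gamma
      (1 * Real.Gamma (1/2) + (1/2) * (-√π * (Real.eulerMascheroniConstant + 2 * Real.log 2)))
      (3/2) := by
    have e : (fun x : ℝ => Real.Gamma (x + -1 + 1)) = Real.Gamma := by funext s; ring_nf
    rw [e] at h3; exact h3
  convert h4 using 1
  rw [Real.Gamma_one_half_eq]; ring

lemma J_val :
    ∫ t in Ioi (0:ℝ), t ^ ((1:ℝ)/2) * (Real.log t * Real.exp (-t)) =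
      √π - √π * (Real.eulerMascheroniConstant + 2 * Real.log 2) / 2 := by
  set J : ℝ := ∫ t in Ioi (0:ℝ), t ^ ((1:ℝ)/2) * (Real.log t * Real.exp (-t)) with hJ
  have hs : (0:ℝ) < (3/2 : ℂ).re := by norm_num
  have hC := Complex.hasDerivAt_GammaIntegral hs
  have hCeq : (∫ t : ℝ in Ioi 0, (t:ℂ) ^ ((3/2 : ℂ) - 1) * (Real.log t * Real.exp (-t))) = (J : ℂ) := by
    have cc : ∀ r : ℝ, (r : ℂ) = @RCLike.ofReal ℂ _ r := fun r => rfl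
    calc (∫ t : ℝ in Ioi 0, (t:ℂ) ^ ((3/2 : ℂ) - 1) * (Real.log t * Real.exp (-t)))
        = ∫ t : ℝ in Ioi 0,
            @RCLike.ofReal ℂ _ (t ^ ((1:ℝ)/2) * (Real.log t * Real.exp (-t))) := by
          refine setIntegral_congr_fun measurableSet_Ioi fun t ht => ?_
          have h1 : ((3/2 : ℂ) - 1) = ((1/2 : ℝ) : ℂ) := by norm_num
          rw [h1, ← Complex.ofReal_cpow (le_of_lt ht), ← cc]
          push_cast
          ring
      _ = (J : ℂ) := by rw [integral_ofReal, hJ, cc]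
  rw [hCeq] at hC
  have hG : HasDerivAt Complex.Gamma (J : ℂ) (3/2) := by
    refine hC.congr_of_eventuallyEq ?_
    have hopen : IsOpen {s : ℂ | 0 < s.re} := isOpen_lt continuous_const Complex.continuous_re
    filter_upwards [hopen.mem_nhds hs] with s hs'
    exact Complex.Gamma_eq_integral hs'
  have h32 : ((3/2 : ℝ) : ℂ) = (3/2 : ℂ) := by norm_num
  have hR : HasDerivAt Real.Gamma ((J:ℂ)).re (3/2 : ℝ) := (h32 ▸ hG).real_of_complex
  rw [Complex.ofReal_re J] at hR
  exact hR.unique hasDerivAt_Gamma_three_half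

lemma K_val : ∫ t in Ioi (0:ℝ), t ^ ((1:ℝ)/2) * Real.exp (-t) = √π / 2 := by
  have h := Real.Gamma_eq_integral (by norm_num : (0:ℝ) < 3/2)
  have h2 : Real.Gamma (3/2) = √π / 2 := by
    have := Real.Gamma_add_one (by norm_num : (1/2:ℝ) ≠ 0)
    rw [show (1/2 : ℝ) + 1 = 3/2 by norm_num, Real.Gamma_one_half_eq] at this
    rw [this]; ring
  rw [← h2, h]
  refine setIntegral_congr_fun measurableSet_Ioi fun t ht => ?_
  rw [show (3/2 : ℝ) - 1 = 1/2 by norm_num]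
  ring

lemma abs_log_le {x : ℝ} (hx : 0 < x) : |Real.log x| ≤ x + x⁻¹ := by
  rw [abs_le]
  constructor
  · have h1 : Real.log x⁻¹ ≤ x⁻¹ - 1 := Real.log_le_sub_one_of_pos (by positivity)
    rw [Real.log_inv] at h1
    nlinarith
  · have h2 : Real.log x ≤ x - 1 := Real.log_le_sub_one_of_pos hx
    nlinarith [inv_pos.mpr hx]

lemma integrable_J : IntegrableOn (fun t : ℝ => t ^ ((1:ℝ)/2) * (Real.log t * Real.exp (-t))) (Ioi 0) := by
  have h1 := Real.GammaIntegral_convergent (by norm_num : (0:ℝ) < 5/2)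
  have h2 := Real.GammaIntegral_convergent (by norm_num : (0:ℝ) < 1/2)
  refine Integrable.mono' (h1.add h2) ?_ ?_
  · apply Measurable.aestronglyMeasurable
    exact ((measurable_id.pow_const _).mul
      (Real.measurable_log.mul (measurable_id.neg.exp)))
  · filter_upwards [ae_restrict_mem measurableSet_Ioi] with t ht
    have ht' : (0:ℝ) < t := ht
    have hb := abs_log_le ht'
    have h0 : |t ^ ((1:ℝ)/2) * (Real.log t * Real.exp (-t))|
        = t ^ ((1:ℝ)/2) * Real.exp (-t) * |Real.log t| := by
      rw [abs_mul, abs_mul, abs_of_nonneg (Real.rpow_nonneg ht'.le _),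
        abs_of_nonneg (Real.exp_pos _).le]
      ring
    rw [Real.norm_eq_abs, h0]
    have hle : t ^ ((1:ℝ)/2) * Real.exp (-t) * |Real.log t|
        ≤ t ^ ((1:ℝ)/2) * Real.exp (-t) * (t + t⁻¹) := by
      have : (0:ℝ) ≤ t ^ ((1:ℝ)/2) * Real.exp (-t) := by positivity
      exact mul_le_mul_of_nonneg_left hb this
    refine hle.trans (le_of_eq ?_)
    simp only [Pi.add_apply]
    have e5 : t ^ ((5:ℝ)/2 - 1) = t ^ ((1:ℝ)/2) * t := by
      rw [show (5:ℝ)/2 - 1 = 1/2 + 1 by norm_num, Real.rpow_add ht', Real.rpow_one]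
    have em : t ^ ((1:ℝ)/2 - 1) = t ^ ((1:ℝ)/2) * t⁻¹ := by
      rw [show (1:ℝ)/2 - 1 = 1/2 + -1 by norm_num, Real.rpow_add ht', Real.rpow_neg_one]
    rw [e5, em]
    ring

end Aux

section Sub
variable {b : ℝ}

lemma Jb_val (hb : 0 < b) :
    ∫ y in Ioi (0:ℝ), y ^ ((1:ℝ)/2) * Real.exp (-(b*y)) * Real.log y =
      b ^ (-(3:ℝ)/2) *
        ((√π - √π * (Real.eulerMascheroniConstant + 2 * Real.log 2) / 2) - Real.log b * (√π / 2)) := by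
  have key := integral_comp_mul_left_Ioi
    (fun v : ℝ => (b⁻¹ * v) ^ ((1:ℝ)/2) * Real.exp (-v) * Real.log (b⁻¹ * v)) 0 hb
  have lhs_eq : ∫ y in Ioi (0:ℝ), y ^ ((1:ℝ)/2) * Real.exp (-(b*y)) * Real.log y =
      ∫ y in Ioi (0:ℝ),
        (fun v : ℝ => (b⁻¹ * v) ^ ((1:ℝ)/2) * Real.exp (-v) * Real.log (b⁻¹ * v)) (b * y) := by
    refine setIntegral_congr_fun measurableSet_Ioi fun y hy => ?_
    simp only
    rw [inv_mul_cancel_left₀ hb.ne']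
  rw [lhs_eq, key, mul_zero]
  have inner_eq : ∫ v in Ioi (0:ℝ),
      (b⁻¹ * v) ^ ((1:ℝ)/2) * Real.exp (-v) * Real.log (b⁻¹ * v) =
      ∫ v in Ioi (0:ℝ),
        b ^ (-(1:ℝ)/2) * (v ^ ((1:ℝ)/2) * (Real.log v * Real.exp (-v)))
          - (b ^ (-(1:ℝ)/2) * Real.log b) * (v ^ ((1:ℝ)/2) * Real.exp (-v)) := by
    refine setIntegral_congr_fun measurableSet_Ioi fun v hv => ?_
    have hv' : (0:ℝ) < v := hv
    have h1 : (b⁻¹ * v) ^ ((1:ℝ)/2) = b ^ (-(1:ℝ)/2) * v ^ ((1:ℝ)/2) := by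
      rw [Real.mul_rpow (by positivity) hv'.le, Real.inv_rpow hb.le,
        ← Real.rpow_neg hb.le]
      norm_num
    have h2 : Real.log (b⁻¹ * v) = -Real.log b + Real.log v := by
      rw [Real.log_mul (by positivity) hv'.ne', Real.log_inv]
    rw [h1, h2]
    ring
  rw [inner_eq]
  rw [integral_sub ((integrable_J.const_mul _)) (((Real.GammaIntegral_convergent
      (by norm_num : (0:ℝ) < 3/2)).congr_fun (fun t ht => by
        rw [show (3/2:ℝ) - 1 = 1/2 by norm_num]; ring) measurableSet_Ioi).const_mul _),
    integral_const_mul, integral_const_mul, J_val, K_val]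
  rw [smul_eq_mul]
  have hbne : b ^ (-(1:ℝ)/2) * b⁻¹ = b ^ (-(3:ℝ)/2) := by
    rw [← Real.rpow_neg_one b, ← Real.rpow_add hb]
    norm_num
  rw [← hbne]
  ring

end Sub

lemma L_val {b : ℝ} (hb : 0 < b) :
    ∫ x in Ioi (0:ℝ), x ^ 2 * Real.exp (-(b*x^2)) * Real.log x =
      (1/4) * (b ^ (-(3:ℝ)/2) *
        ((√π - √π * (Real.eulerMascheroniConstant + 2 * Real.log 2) / 2) - Real.log b * (√π / 2))) := by
  have key := integral_comp_rpow_Ioi_of_pos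
    (g := fun y : ℝ => (1/4) * (y ^ ((1:ℝ)/2) * Real.exp (-(b*y)) * Real.log y)) zero_lt_two
  have lhs_eq : ∫ x in Ioi (0:ℝ), x ^ 2 * Real.exp (-(b*x^2)) * Real.log x =
      ∫ x in Ioi (0:ℝ), (2 * x ^ ((2:ℝ) - 1)) •
        (fun y : ℝ => (1/4) * (y ^ ((1:ℝ)/2) * Real.exp (-(b*y)) * Real.log y)) (x ^ (2:ℝ)) := by
    refine setIntegral_congr_fun measurableSet_Ioi fun x hx => ?_
    have hx' : (0:ℝ) < x := hx
    have e2 : x ^ (2:ℝ) = x ^ 2 := by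
      rw [← Real.rpow_natCast x 2]; norm_num
    have e1 : x ^ ((2:ℝ) - 1) = x := by
      norm_num
    have e3 : (x ^ 2 : ℝ) ^ ((1:ℝ)/2) = x := by
      rw [← Real.rpow_natCast x 2, ← Real.rpow_mul hx'.le]
      norm_num
    have e4 : Real.log (x ^ 2) = 2 * Real.log x := by
      rw [Real.log_pow]; norm_num
    simp only [smul_eq_mul, e2, e1, e3, e4]
    ring
  rw [lhs_eq, key, integral_const_mul, Jb_val hb]

lemma A_val {b : ℝ} (hb : 0 < b) :
    ∫ x in Ioi (0:ℝ), x ^ 2 * Real.exp (-(b*x^2)) = b ^ (-(3:ℝ)/2) * (1/2) * (√π / 2) := by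
  have key := integral_rpow_mul_exp_neg_mul_rpow (p := 2) (q := 2) (b := b)
    zero_lt_two (by norm_num) hb
  have lhs_eq : ∫ x in Ioi (0:ℝ), x ^ 2 * Real.exp (-(b*x^2)) =
      ∫ x in Ioi (0:ℝ), x ^ (2:ℝ) * Real.exp (-b * x ^ (2:ℝ)) := by
    refine setIntegral_congr_fun measurableSet_Ioi fun x hx => ?_
    have e2 : x ^ (2:ℝ) = x ^ 2 := by rw [← Real.rpow_natCast x 2]; norm_num
    rw [e2, neg_mul]
  rw [lhs_eq, key]
  have h2 : Real.Gamma ((2+1)/2) = √π / 2 := by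
    rw [show ((2:ℝ)+1)/2 = 1/2 + 1 by norm_num, Real.Gamma_add_one (by norm_num),
      Real.Gamma_one_half_eq]
    ring
  rw [h2]
  norm_num

lemma B_val {b : ℝ} (hb : 0 < b) :
    ∫ x in Ioi (0:ℝ), x ^ 4 * Real.exp (-(b*x^2)) = b ^ (-(5:ℝ)/2) * (1/2) * (3 * √π / 4) := by
  have key := integral_rpow_mul_exp_neg_mul_rpow (p := 2) (q := 4) (b := b)
    zero_lt_two (by norm_num) hb
  have lhs_eq : ∫ x in Ioi (0:ℝ), x ^ 4 * Real.exp (-(b*x^2)) =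
      ∫ x in Ioi (0:ℝ), x ^ (4:ℝ) * Real.exp (-b * x ^ (2:ℝ)) := by
    refine setIntegral_congr_fun measurableSet_Ioi fun x hx => ?_
    have e2 : x ^ (2:ℝ) = x ^ 2 := by rw [← Real.rpow_natCast x 2]; norm_num
    have e4 : x ^ (4:ℝ) = x ^ 4 := by rw [← Real.rpow_natCast x 4]; norm_num
    rw [e2, e4, neg_mul]
  rw [lhs_eq, key]
  have h2 : Real.Gamma ((4+1)/2) = 3 * √π / 4 := by
    rw [show ((4:ℝ)+1)/2 = 3/2 + 1 by norm_num, Real.Gamma_add_one (by norm_num)]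
    have : Real.Gamma (3/2) = √π / 2 := by
      rw [show (3:ℝ)/2 = 1/2 + 1 by norm_num, Real.Gamma_add_one (by norm_num),
        Real.Gamma_one_half_eq]
      ring
    rw [this]; ring
  rw [h2]
  norm_num

lemma int_pow_gauss {b : ℝ} (hb : 0 < b) (n : ℕ) :
    IntegrableOn (fun x : ℝ => x ^ n * Real.exp (-(b*x^2))) (Ioi 0) := by
  refine ((integrableOn_rpow_mul_exp_neg_mul_sq hb
    (s := (n:ℝ)) (lt_of_lt_of_le (by norm_num) (Nat.cast_nonneg n))).congr_fun (fun x hx => ?_) measurableSet_Ioi)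
  simp only [Real.rpow_natCast, neg_mul]

lemma int_log_gauss {b : ℝ} (hb : 0 < b) :
    IntegrableOn (fun x : ℝ => x ^ 2 * Real.exp (-(b*x^2)) * Real.log x) (Ioi 0) := by
  refine Integrable.mono' ((int_pow_gauss hb 3).add (int_pow_gauss hb 1)) ?_ ?_
  · apply Measurable.aestronglyMeasurable
    exact ((measurable_id.pow_const _).mul
      ((((measurable_id.pow_const 2).const_mul b).neg).exp)).mul Real.measurable_log
  · filter_upwards [ae_restrict_mem measurableSet_Ioi] with x hx
    have hx' : (0:ℝ) < x := hx
    have hlb := abs_log_le hx'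
    rw [Real.norm_eq_abs, abs_mul, abs_of_nonneg (by positivity : (0:ℝ) ≤ x ^ 2 * Real.exp (-(b*x^2)))]
    have hle : x ^ 2 * Real.exp (-(b*x^2)) * |Real.log x|
        ≤ x ^ 2 * Real.exp (-(b*x^2)) * (x + x⁻¹) := by
      exact mul_le_mul_of_nonneg_left hlb (by positivity)
    refine hle.trans (le_of_eq ?_)
    simp only [Pi.add_apply]
    field_simp

/-- The differential entropy `-∫_0^∞ p(α) log p(α) dα` of the probability density
`p(α) = (1/T)·α²·exp(-α²/(2σ))` on `[0,∞)`, where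
`T = ∫_0^∞ α² exp(-α²/(2σ)) dα`, equals
`γ - 1/2 + (1/2)(log 2 + log π + log σ)`, with `γ` the Euler–Mascheroni constant. -/
theorem differential_entropy_alpha_sq_gaussian (σ : ℝ) (hσ : 0 < σ)
    (T : ℝ) (hT : T = ∫ α in Set.Ioi (0 : ℝ), α ^ 2 * Real.exp (-α ^ 2 / (2 * σ))) :
    -(∫ α in Set.Ioi (0 : ℝ),
        (α ^ 2 * Real.exp (-α ^ 2 / (2 * σ)) / T) *
          Real.log (α ^ 2 * Real.exp (-α ^ 2 / (2 * σ)) / T)) =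
      Real.eulerMascheroniConstant - 1 / 2 +
        (1 / 2) * (Real.log 2 + Real.log Real.pi + Real.log σ) := by
  set b : ℝ := (2*σ)⁻¹ with hbdef
  have hb : 0 < b := by positivity
  have harg : ∀ α : ℝ, -α ^ 2 / (2 * σ) = -(b * α ^ 2) := fun α => by
    rw [hbdef]; field_simp
  -- value of T
  have hTval : T = b ^ (-(3:ℝ)/2) * (1/2) * (√π / 2) := by
    rw [hT, ← A_val hb]
    refine setIntegral_congr_fun measurableSet_Ioi fun α hα => ?_
    rw [harg α]
  have hTpos : 0 < T := by
    rw [hTval]; positivity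
  -- rewrite the integrand
  have hint : (∫ α in Set.Ioi (0 : ℝ),
      (α ^ 2 * Real.exp (-α ^ 2 / (2 * σ)) / T) *
        Real.log (α ^ 2 * Real.exp (-α ^ 2 / (2 * σ)) / T)) =
      ∫ α in Set.Ioi (0 : ℝ), T⁻¹ *
        (2 * (α ^ 2 * Real.exp (-(b*α^2)) * Real.log α)
          - b * (α ^ 4 * Real.exp (-(b*α^2)))
          - Real.log T * (α ^ 2 * Real.exp (-(b*α^2)))) := by
    refine setIntegral_congr_fun measurableSet_Ioi fun α hα => ?_
    have hα' : (0:ℝ) < α := hα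
    rw [harg α]
    have hf : (0:ℝ) < α ^ 2 * Real.exp (-(b*α^2)) := by positivity
    have hlog : Real.log (α ^ 2 * Real.exp (-(b*α^2)) / T)
        = 2 * Real.log α - b * α ^ 2 - Real.log T := by
      rw [Real.log_div hf.ne' hTpos.ne', Real.log_mul (by positivity) (Real.exp_pos _).ne',
        Real.log_exp, Real.log_pow]
      push_cast; ring
    rw [hlog]
    field_simp
  rw [hint]
  have hi2 := int_pow_gauss hb 2
  have hi4 := int_pow_gauss hb 4
  have hilog := int_log_gauss hb
  have hf1 : Integrable (fun α : ℝ => 2 * (α ^ 2 * Real.exp (-(b*α^2)) * Real.log α)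
      - b * (α ^ 4 * Real.exp (-(b*α^2)))) (volume.restrict (Ioi 0)) :=
    (hilog.const_mul 2).sub (hi4.const_mul b)
  have hf2 : Integrable (fun α : ℝ => Real.log T * (α ^ 2 * Real.exp (-(b*α^2))))
      (volume.restrict (Ioi 0)) := hi2.const_mul _
  rw [integral_const_mul, integral_sub hf1 hf2,
    integral_sub (hilog.const_mul 2) (hi4.const_mul b),
    integral_const_mul, integral_const_mul, integral_const_mul,
    L_val hb, B_val hb, A_val hb]
  -- now pure algebra with logs and rpow
  have hu5 : b ^ (-(5:ℝ)/2) = b ^ (-(3:ℝ)/2) * b⁻¹ := by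
    rw [← Real.rpow_neg_one b, ← Real.rpow_add hb]; norm_num
  have hlogT : Real.log T = -(3/2) * Real.log b - Real.log 2 + (1/2) * Real.log π - Real.log 2 := by
    rw [hTval, Real.log_mul (by positivity) (by positivity),
      Real.log_mul (by positivity) (by norm_num),
      Real.log_div (Real.sqrt_ne_zero'.mpr Real.pi_pos) (by norm_num),
      Real.log_sqrt Real.pi_pos.le, Real.log_rpow hb, Real.log_div one_ne_zero two_ne_zero, Real.log_one]
    ring
  have hlogb : Real.log b = -(Real.log 2 + Real.log σ) := by
    rw [hbdef, Real.log_inv, Real.log_mul (by norm_num) hσ.ne']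
  have hupos : (0:ℝ) < b ^ (-(3:ℝ)/2) := Real.rpow_pos_of_pos hb _
  have hsp : (0:ℝ) < √π := Real.sqrt_pos.mpr Real.pi_pos
  rw [hlogT, hTval, hu5, hlogb]
  field_simp
  ring
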